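/- Let $R$ be an integral domain with fraction field $Q$, let $X_\infty(R)$ be as before with its $Q^\times$-action, and suppose: for any $\epsilon > 0$, any non-trivial $\phi = (\phi_p) \in X_\infty(R)$, any character $\pi$ of $R_+$, any $P \in R^\times$, and any $r_1, \dots, r_n \in R$, there exist $p, q \in R^\times$ with $P \mid p$ such that $|\phi_p(q r_i) - \pi(r_i)| < \epsilon$ for all $i$. Then for any two non-trivial elements $\phi, \psi \in X_\infty(R)$, $\psi$ lies in the closure of the $Q^\times$-orbit of $\phi$ (in the product topology on $\prod_{p} \widehat{R_+}$, where $\widehat{R_+}$ carries the topology of pointwise convergence). -/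

import Mathlib

/-- Under the approximation condition on `R`, for any two non-trivial elements
`φ, ψ ∈ X_∞(R)`, `ψ` lies in the closure of the `Q^×`-orbit of `φ` (in the topology of
pointwise convergence). -/
theorem stmt14 (R : Type*) [CommRing R] [IsDomain R]
    (happrox : ∀ ε : ℝ, 0 < ε →
      ∀ g : {p : R // p ≠ 0} → R → ℂ,
        (∀ p x, ‖g p x‖ = 1) →
        (∀ p x y, g p (x + y) = g p x * g p y) →
        (∀ (p q : {p : R // p ≠ 0}) (c : R), c * (p : R) = (q : R) →
          ∀ x, g q (c * x) = g p x) →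
        (∃ p x, g p x ≠ 1) →
        ∀ π : R → ℂ, (∀ x, ‖π x‖ = 1) →
          (∀ x y, π (x + y) = π x * π y) →
          ∀ P : R, P ≠ 0 → ∀ (n : ℕ) (r : Fin n → R),
            ∃ (p q : R) (hp : p ≠ 0), q ≠ 0 ∧ P ∣ p ∧
              ∀ i, ‖g ⟨p, hp⟩ (q * r i) - π (r i)‖ < ε)
    (φ ψ : {p : R // p ≠ 0} → R → ℂ)
    (hφabs : ∀ p x, ‖φ p x‖ = 1)
    (hφchar : ∀ p x y, φ p (x + y) = φ p x * φ p y)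
    (hφcompat : ∀ (p q : {p : R // p ≠ 0}) (c : R), c * (p : R) = (q : R) →
      ∀ x, φ q (c * x) = φ p x)
    (hφnontriv : ∃ p x, φ p x ≠ 1)
    (hψabs : ∀ p x, ‖ψ p x‖ = 1)
    (hψchar : ∀ p x y, ψ p (x + y) = ψ p x * ψ p y)
    (hψcompat : ∀ (p q : {p : R // p ≠ 0}) (c : R), c * (p : R) = (q : R) →
      ∀ x, ψ q (c * x) = ψ p x)
    (hψnontriv : ∃ p x, ψ p x ≠ 1) :
    ψ ∈ closure {χ : {p : R // p ≠ 0} → R → ℂ |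
      ∃ (p₀ q₀ : R) (h₀ : p₀ ≠ 0), q₀ ≠ 0 ∧
        χ = fun s x => φ ⟨s.1 * p₀, mul_ne_zero s.2 h₀⟩ (q₀ * x)} := by
  classical
  -- Key finite approximation lemma
  have key : ∀ ε : ℝ, 0 < ε → ∀ F : Finset ({p : R // p ≠ 0} × R),
      ∃ χ ∈ {χ : {p : R // p ≠ 0} → R → ℂ |
        ∃ (p₀ q₀ : R) (h₀ : p₀ ≠ 0), q₀ ≠ 0 ∧
          χ = fun s x => φ ⟨s.1 * p₀, mul_ne_zero s.2 h₀⟩ (q₀ * x)},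
        ∀ k ∈ F, ‖χ k.1 k.2 - ψ k.1 k.2‖ < ε := by
    intro ε hε F
    set P : R := ∏ k ∈ F, (k.1 : R) with hPdef
    have hP : P ≠ 0 := Finset.prod_ne_zero_iff.2 fun k _ => k.1.2
    set c : ({p : R // p ≠ 0} × R) → R := fun k => ∏ m ∈ F.erase k, (m.1 : R) with hcdef
    have hck : ∀ k ∈ F, c k * (k.1 : R) = P :=
      fun k hk => Finset.prod_erase_mul F _ hk
    set π : R → ℂ := fun x => ψ ⟨P, hP⟩ x with hπdef
    let e := F.equivFin
    obtain ⟨p, q, hp, hq, _, hclose⟩ :=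
      happrox ε hε φ hφabs hφchar hφcompat hφnontriv π (fun x => hψabs _ x)
        (fun x y => hψchar _ x y) P hP F.card
        (fun j => c (e.symm j).1 * (e.symm j).1.2)
    refine ⟨fun s x => φ ⟨s.1 * p, mul_ne_zero s.2 hp⟩ ((q * P) * x),
      ⟨p, q * P, hp, mul_ne_zero hq hP, rfl⟩, ?_⟩
    intro k hk
    have hck' := hck k hk
    have h1 : φ ⟨(k.1 : R) * p, mul_ne_zero k.1.2 hp⟩ ((q * P) * k.2)
        = φ ⟨p, hp⟩ (q * (c k * k.2)) := by
      have hcmp := hφcompat ⟨p, hp⟩ ⟨(k.1 : R) * p, mul_ne_zero k.1.2 hp⟩ (k.1 : R) rfl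
        (q * (c k * k.2))
      rw [← hcmp]
      congr 1
      rw [← hck']; ring
    have h2 : ψ k.1 k.2 = π (c k * k.2) :=
      (hψcompat k.1 ⟨P, hP⟩ (c k) hck' k.2).symm
    have h3 := hclose (e ⟨k, hk⟩)
    simp only [Equiv.symm_apply_apply] at h3
    simpa [h1, h2] using h3
  rw [mem_closure_iff_nhds]
  intro U hU
  rw [nhds_pi, Filter.mem_pi] at hU
  obtain ⟨I, hIfin, t, ht, hsub⟩ := hU
  have ht' : ∀ s : {p : R // p ≠ 0}, ∃ (J : Set R) (u : R → Set ℂ),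
      J.Finite ∧ (∀ x, u x ∈ nhds (ψ s x)) ∧ J.pi u ⊆ t s := by
    intro s
    have h := ht s
    rw [nhds_pi, Filter.mem_pi] at h
    obtain ⟨J, hJ, u, hu, hsub'⟩ := h
    exact ⟨J, u, hJ, hu, hsub'⟩
  choose J u hJfin hu hsubJ using ht'
  have hball : ∀ s x, ∃ δ : ℝ, 0 < δ ∧ Metric.ball (ψ s x) δ ⊆ u s x :=
    fun s x => Metric.mem_nhds_iff.1 (hu s x)
  choose δ hδpos hδ using hball
  set F : Finset ({p : R // p ≠ 0} × R) :=
    hIfin.toFinset.biUnion (fun s => (hJfin s).toFinset.image fun x => (s, x)) with hF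
  have hmin : ∃ ε : ℝ, 0 < ε ∧ ∀ k ∈ F, ε ≤ δ k.1 k.2 := by
    rcases F.eq_empty_or_nonempty with h | h
    · exact ⟨1, one_pos, by simp [h]⟩
    · exact ⟨F.inf' h (fun k => δ k.1 k.2),
        (Finset.lt_inf'_iff h).2 fun k _ => hδpos k.1 k.2,
        fun k hk => Finset.inf'_le _ hk⟩
  obtain ⟨ε, hε, hεle⟩ := hmin
  obtain ⟨χ, hχS, hχ⟩ := key ε hε F
  refine ⟨χ, ?_, hχS⟩
  apply hsub
  rw [Set.mem_pi]
  intro s hsI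
  apply hsubJ s
  rw [Set.mem_pi]
  intro x hxJ
  have hkF : (s, x) ∈ F := by
    rw [hF, Finset.mem_biUnion]
    exact ⟨s, hIfin.mem_toFinset.2 hsI,
      Finset.mem_image.2 ⟨x, (hJfin s).mem_toFinset.2 hxJ, rfl⟩⟩
  apply hδ s x
  rw [Metric.mem_ball, Complex.dist_eq]
  exact lt_of_lt_of_le (hχ (s, x) hkF) (hεle _ hkF)
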